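/- arXiv:2204.05687 — 2 statements merged into one kernel-verified Lean document; each statement's English description precedes it below -/
import Mathlib

section
/- Let k ≥ 1, λ > 0, and let μ_λ be the product on ℝ^k of k copies of the uniform distribution on [−λ, λ]. Let ι be a finite nonempty type of classes and F : ℝ^k → ι → ℝ a measurable class-score function with 0 ≤ F(ψ)(c) ≤ 1 for all ψ ∈ ℝ^k and c ∈ ι, and define the smoothed score G(φ)(c) = ∫ F(φ + ε)(c) dμ_λ(ε). Fix φ ∈ ℝ^k, a class c_A, set p_A = G(φ)(c_A), and suppose p_B ∈ ℝ satisfies G(φ)(c) ≤ p_B for every class c ≠ c_A. Then for every δ ∈ ℝ^k with ‖δ‖₁ < λ (p_A − p_B), one has G(φ + δ)(c_A) > G(φ + δ)(c) for every class c ≠ c_A; in particular the smoothed classifier's predicted class at φ + δ is still c_A. -/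
open MeasureTheory

/-- The product on `ℝ^k` of `k` copies of the uniform distribution on `[-λ, λ]`. -/
noncomputable def unifPi (k : ℕ) (l : ℝ) : Measure (Fin k → ℝ) :=
  Measure.pi fun _ => (ENNReal.ofReal (2 * l))⁻¹ • volume.restrict (Set.Icc (-l) l)

/-- Smoothing of a class-score function `F` by a measure `μ`. -/
noncomputable def smoothedScore {k : ℕ} {ι : Type} (μ : Measure (Fin k → ℝ))
    (F : (Fin k → ℝ) → ι → ℝ) (φ : Fin k → ℝ) (c : ι) : ℝ :=
  ∫ ε, F (φ + ε) c ∂μ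

open Set

theorem vol_Icc_shift_diff (a b d : ℝ) :
    volume (Icc (a + d) (b + d) \ Icc a b) ≤ ENNReal.ofReal |d| := by
  rcases le_or_gt 0 d with hd | hd
  · have hsub : Icc (a + d) (b + d) \ Icc a b ⊆ Ioc b (b + d) := by
      rintro x ⟨⟨h1, h2⟩, hx⟩
      simp only [mem_Icc, not_and, not_le] at hx
      exact ⟨hx (by linarith), h2⟩
    refine le_trans (measure_mono hsub) ?_
    rw [Real.volume_Ioc]
    exact ENNReal.ofReal_le_ofReal (by rw [abs_of_nonneg hd]; linarith)
  · have hsub : Icc (a + d) (b + d) \ Icc a b ⊆ Ico (a + d) a := by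
      rintro x ⟨⟨h1, h2⟩, hx⟩
      simp only [mem_Icc, not_and, not_le] at hx
      refine mem_Ico.2 ⟨h1, ?_⟩
      by_contra h
      push_neg at h
      exact absurd (hx h) (by linarith)
    refine le_trans (measure_mono hsub) ?_
    rw [Real.volume_Ico]
    exact ENNReal.ofReal_le_ofReal (by rw [abs_of_neg hd]; linarith)

theorem pi_diff_vol {k : ℕ} {l : ℝ} (δ : Fin k → ℝ)
    (s t : Fin k → Set ℝ)
    (hvt : ∀ i, volume (t i) = ENNReal.ofReal (2 * l))
    (hd : ∀ i, volume (t i \ s i) ≤ ENNReal.ofReal |δ i|) :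
    volume (univ.pi t \ univ.pi s) ≤
      ENNReal.ofReal (∑ i, |δ i|) * (ENNReal.ofReal (2 * l)) ^ (k - 1) := by
  have hsub : univ.pi t \ univ.pi s ⊆
      ⋃ i, univ.pi (Function.update t i (t i \ s i)) := by
    rintro x ⟨hxt, hxs⟩
    simp only [mem_pi, mem_univ, forall_true_left, not_forall] at hxs
    obtain ⟨i, hi⟩ := hxs
    refine mem_iUnion.2 ⟨i, fun j _ => ?_⟩
    rcases eq_or_ne j i with rfl | hji
    · rw [Function.update_self]
      exact ⟨hxt j (mem_univ j), hi⟩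
    · rw [Function.update_of_ne hji]
      exact hxt j (mem_univ j)
  refine le_trans (measure_mono hsub) (le_trans (measure_iUnion_le _) ?_)
  rw [tsum_fintype]
  have hvol : ∀ i, volume (univ.pi (Function.update t i (t i \ s i))) ≤
      ENNReal.ofReal |δ i| * (ENNReal.ofReal (2 * l)) ^ (k - 1) := by
    intro i
    rw [volume_pi_pi]
    simp only [Function.apply_update (fun _ s => volume s) t]
    rw [Finset.prod_update_of_mem (Finset.mem_univ i)]
    have h2 : ∏ j ∈ Finset.univ \ {i}, volume (t j) =
        (ENNReal.ofReal (2 * l)) ^ (k - 1) := by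
      rw [Finset.prod_congr rfl fun j _ => hvt j, Finset.prod_const,
        ← Finset.erase_eq, Finset.card_erase_of_mem (Finset.mem_univ i),
        Finset.card_univ, Fintype.card_fin]
    rw [h2]
    exact mul_le_mul_left (hd i) _
  refine le_trans (Finset.sum_le_sum fun i _ => hvol i) ?_
  rw [← Finset.sum_mul, ← ENNReal.ofReal_sum_of_nonneg (fun i _ => abs_nonneg (δ i))]

theorem unifPi_eq (k : ℕ) {l : ℝ} (hl : 0 < l) :
    unifPi k l = ((ENNReal.ofReal (2 * l))⁻¹) ^ k •
      (volume : Measure (Fin k → ℝ)).restrict (univ.pi fun _ => Icc (-l) l) := by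
  have h2l : (0:ℝ) < 2 * l := by linarith
  have hc0 : ENNReal.ofReal (2 * l) ≠ 0 := by
    simp [ENNReal.ofReal_eq_zero, not_le, h2l, hl]
  have hcT : ENNReal.ofReal (2 * l) ≠ ⊤ := ENNReal.ofReal_ne_top
  have hIcc : (volume : Measure ℝ) (Icc (-l) l) = ENNReal.ofReal (2 * l) := by
    rw [Real.volume_Icc]; congr 1; ring
  haveI : ∀ _i : Fin k, IsProbabilityMeasure
      ((ENNReal.ofReal (2 * l))⁻¹ • (volume : Measure ℝ).restrict (Icc (-l) l)) := by
    intro _i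
    constructor
    rw [Measure.smul_apply, Measure.restrict_apply MeasurableSet.univ, univ_inter, hIcc,
      smul_eq_mul, ENNReal.inv_mul_cancel hc0 hcT]
  refine Measure.pi_eq fun s hs => ?_
  rw [Measure.smul_apply, Measure.restrict_apply (MeasurableSet.univ_pi hs),
    ← pi_inter_distrib, volume_pi_pi]
  simp only [Measure.smul_apply, Measure.restrict_apply (hs _), smul_eq_mul]
  rw [Finset.prod_mul_distrib, Finset.prod_const, Finset.card_univ, Fintype.card_fin]

theorem smoothed_lip {k : ℕ} (hk : 1 ≤ k) {l : ℝ} (hl : 0 < l)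
    {ι : Type} (F : (Fin k → ℝ) → ι → ℝ)
    (hFmeas : ∀ c, Measurable fun ψ => F ψ c)
    (hF0 : ∀ ψ c, 0 ≤ F ψ c) (hF1 : ∀ ψ c, F ψ c ≤ 1)
    (ψ δ : Fin k → ℝ) (c : ι) :
    |smoothedScore (unifPi k l) F (ψ + δ) c - smoothedScore (unifPi k l) F ψ c|
      ≤ (∑ i, |δ i|) / (2 * l) := by
  have h2l : (0:ℝ) < 2 * l := by linarith
  set B0 : Set (Fin k → ℝ) := univ.pi fun _ => Icc (-l) l with hB0
  set Bδ : Set (Fin k → ℝ) := univ.pi fun i => Icc (-l + δ i) (l + δ i) with hBδ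
  have hB0m : MeasurableSet B0 := MeasurableSet.univ_pi fun _ => measurableSet_Icc
  have hBδm : MeasurableSet Bδ := MeasurableSet.univ_pi fun _ => measurableSet_Icc
  have hvB0 : volume B0 = (ENNReal.ofReal (2 * l)) ^ k := by
    rw [hB0, volume_pi_pi]
    simp only [Real.volume_Icc]
    rw [Finset.prod_const, Finset.card_univ, Fintype.card_fin]
    congr 2; ring
  have hvBδ : ∀ i, (volume : Measure ℝ) (Icc (-l + δ i) (l + δ i)) = ENNReal.ofReal (2 * l) := by
    intro i; rw [Real.volume_Icc]; congr 1; ring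
  have hvBδ' : volume Bδ = (ENNReal.ofReal (2 * l)) ^ k := by
    rw [hBδ, volume_pi_pi, Finset.prod_congr rfl fun i _ => hvBδ i, Finset.prod_const,
      Finset.card_univ, Fintype.card_fin]
  have hB0fin : volume B0 ≠ ⊤ := by rw [hvB0]; exact ENNReal.pow_ne_top ENNReal.ofReal_ne_top
  have hBδfin : volume Bδ ≠ ⊤ := by rw [hvBδ']; exact ENNReal.pow_ne_top ENNReal.ofReal_ne_top
  set f : (Fin k → ℝ) → ℝ := fun ε => F (ψ + ε) c with hf
  have hfmeas : Measurable f := (hFmeas c).comp (measurable_const.add measurable_id)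
  have hint : ∀ A : Set (Fin k → ℝ), volume A ≠ ⊤ → IntegrableOn f A volume := by
    intro A hA
    refine Integrable.mono' (integrableOn_const (C := (1:ℝ)) hA)
      hfmeas.aestronglyMeasurable ?_
    filter_upwards with x
    rw [Real.norm_eq_abs, abs_of_nonneg (hF0 _ c)]
    exact hF1 _ c
  -- substitution
  have hpre : ((· + δ) : (Fin k → ℝ) → _) ⁻¹' Bδ = B0 := by
    ext x
    simp only [mem_preimage, hBδ, hB0, mem_pi, mem_univ, forall_true_left, mem_Icc, Pi.add_apply]
    constructor <;> intro h i <;> (have := h i; constructor <;> linarith [this.1, this.2])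
  have hsubs : ∫ ε in B0, f (ε + δ) = ∫ ε in Bδ, f ε := by
    have key := (measurePreserving_add_right (volume : Measure (Fin k → ℝ)) δ).setIntegral_preimage_emb
      (MeasurableEquiv.addRight δ).measurableEmbedding f Bδ
    rwa [hpre] at key
  -- decomposition
  have hI1 := integral_inter_add_diff (f := f) (μ := volume) (s := Bδ) (t := B0) hB0m (hint Bδ hBδfin)
  have hI2 := integral_inter_add_diff (f := f) (μ := volume) (s := B0) (t := Bδ) hBδm (hint B0 hB0fin)
  have hcomm : Bδ ∩ B0 = B0 ∩ Bδ := inter_comm _ _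
  -- bound on the two small pieces
  have hbound : ∀ A : Set (Fin k → ℝ), MeasurableSet A → volume A ≠ ⊤ →
      volume A ≤ ENNReal.ofReal (∑ i, |δ i|) * (ENNReal.ofReal (2 * l)) ^ (k - 1) →
      ∫ ε in A, f ε ∈ Set.Icc 0 ((∑ i, |δ i|) * (2 * l) ^ (k - 1)) := by
    intro A hAm hAfin hAle
    constructor
    · exact setIntegral_nonneg hAm fun x _ => hF0 _ c
    · have h1 : ∫ ε in A, f ε ≤ ∫ ε in A, (1:ℝ) := by
        refine setIntegral_mono_on (hint A hAfin) (integrableOn_const hAfin)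
          hAm fun x _ => hF1 _ c
      rw [setIntegral_const, smul_eq_mul, mul_one] at h1
      refine le_trans h1 ?_
      have := ENNReal.toReal_mono (by
        exact ENNReal.mul_ne_top ENNReal.ofReal_ne_top (ENNReal.pow_ne_top ENNReal.ofReal_ne_top)) hAle
      rwa [ENNReal.toReal_mul, ENNReal.toReal_pow, ENNReal.toReal_ofReal
        (Finset.sum_nonneg fun i _ => abs_nonneg (δ i)), ENNReal.toReal_ofReal (le_of_lt h2l)]
        at this
  have hd1 : volume (Bδ \ B0) ≤ ENNReal.ofReal (∑ i, |δ i|) * (ENNReal.ofReal (2 * l)) ^ (k - 1) := by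
    refine pi_diff_vol δ _ _ hvBδ fun i => ?_
    have := vol_Icc_shift_diff (-l) l (δ i)
    simpa using this
  have hd2 : volume (B0 \ Bδ) ≤ ENNReal.ofReal (∑ i, |δ i|) * (ENNReal.ofReal (2 * l)) ^ (k - 1) := by
    refine pi_diff_vol δ _ _ (fun i => by rw [Real.volume_Icc]; congr 1; ring) fun i => ?_
    have := vol_Icc_shift_diff (-l + δ i) (l + δ i) (-δ i)
    have he1 : -l + δ i + -δ i = -l := by ring
    have he2 : l + δ i + -δ i = l := by ring
    rw [he1, he2, abs_neg] at this
    exact this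
  have hP := hbound (Bδ \ B0) (hBδm.diff hB0m) (by
      exact fun h => hBδfin (eq_top_mono (measure_mono diff_subset) h)) hd1
  have hQ := hbound (B0 \ Bδ) (hB0m.diff hBδm) (by
      exact fun h => hB0fin (eq_top_mono (measure_mono diff_subset) h)) hd2
  -- assemble
  have hrw1 : smoothedScore (unifPi k l) F (ψ + δ) c
      = (((ENNReal.ofReal (2 * l))⁻¹) ^ k).toReal * ∫ ε in Bδ, f ε := by
    rw [smoothedScore, unifPi_eq k hl, integral_smul_measure, smul_eq_mul, ← hsubs]
    congr 1
    refine setIntegral_congr_fun hB0m fun x _ => ?_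
    simp only [hf]
    congr 1
    funext i
    simp [add_comm, add_assoc, add_left_comm]
  have hrw2 : smoothedScore (unifPi k l) F ψ c
      = (((ENNReal.ofReal (2 * l))⁻¹) ^ k).toReal * ∫ ε in B0, f ε := by
    rw [smoothedScore, unifPi_eq k hl, integral_smul_measure, smul_eq_mul]
  set r : ℝ := (((ENNReal.ofReal (2 * l))⁻¹) ^ k).toReal with hr
  have hrval : r = ((2 * l)⁻¹) ^ k := by
    rw [hr, ENNReal.toReal_pow, ENNReal.toReal_inv, ENNReal.toReal_ofReal (le_of_lt h2l)]
  have hrpos : 0 ≤ r := by rw [hrval]; positivity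
  have hdiff : smoothedScore (unifPi k l) F (ψ + δ) c - smoothedScore (unifPi k l) F ψ c
      = r * ((∫ ε in Bδ \ B0, f ε) - ∫ ε in B0 \ Bδ, f ε) := by
    rw [hrw1, hrw2, ← mul_sub]
    congr 1
    rw [← hI1, ← hI2, hcomm]
    ring
  rw [hdiff, abs_mul, abs_of_nonneg hrpos]
  have habs : |(∫ ε in Bδ \ B0, f ε) - ∫ ε in B0 \ Bδ, f ε| ≤ (∑ i, |δ i|) * (2 * l) ^ (k - 1) := by
    rw [abs_le]
    constructor
    · linarith [hP.1, hQ.2]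
    · linarith [hP.2, hQ.1]
  refine le_trans (mul_le_mul_of_nonneg_left habs hrpos) ?_
  rw [hrval]
  have h2l0 : (2 * l) ≠ 0 := ne_of_gt h2l
  have hfin : ((2 * l)⁻¹) ^ k * ((∑ i, |δ i|) * (2 * l) ^ (k - 1)) = (∑ i, |δ i|) / (2 * l) := by
    obtain ⟨m, rfl⟩ : ∃ m, k = m + 1 := ⟨k - 1, (Nat.succ_pred_eq_of_pos hk).symm⟩
    rw [Nat.add_sub_cancel]
    have hp : (2 * l) ^ m ≠ 0 := pow_ne_zero _ h2l0
    rw [inv_pow, pow_succ, mul_inv, div_eq_mul_inv]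
    field_simp
  rw [hfin]

theorem stmt_0 {k : ℕ} (hk : 1 ≤ k) {l : ℝ} (hl : 0 < l)
    {ι : Type} [Fintype ι] [Nonempty ι]
    (F : (Fin k → ℝ) → ι → ℝ)
    (hFmeas : ∀ c, Measurable fun ψ => F ψ c)
    (hF0 : ∀ ψ c, 0 ≤ F ψ c) (hF1 : ∀ ψ c, F ψ c ≤ 1)
    (φ : Fin k → ℝ) (cA : ι) (pB : ℝ)
    (hpB : ∀ c, c ≠ cA → smoothedScore (unifPi k l) F φ c ≤ pB)
    (δ : Fin k → ℝ)
    (hδ : ∑ i, |δ i| < l * (smoothedScore (unifPi k l) F φ cA - pB)) :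
    ∀ c, c ≠ cA →
      smoothedScore (unifPi k l) F (φ + δ) c < smoothedScore (unifPi k l) F (φ + δ) cA := by
  intro c hc
  have h2l : (0:ℝ) < 2 * l := by linarith
  have hD1 := smoothed_lip hk hl F hFmeas hF0 hF1 φ δ cA
  have hD2 := smoothed_lip hk hl F hFmeas hF0 hF1 φ δ c
  rw [abs_le] at hD1 hD2
  have hDlt : (∑ i, |δ i|) / (2 * l) <
      (smoothedScore (unifPi k l) F φ cA - pB) / 2 := by
    rw [div_lt_div_iff₀ h2l (by norm_num)]
    nlinarith [hδ]
  have hcle := hpB c hc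
  linarith [hD1.1, hD2.2]
end

section
/- Let σ > 0 and let γ_σ = N(0, σ²) be the centered Gaussian measure on ℝ with variance σ². For any measurable h : ℝ → ℝ with 0 ≤ h ≤ 1, define ĥ(x) = ∫ h(x + ε) dγ_σ(ε). If a ∈ ℝ satisfies ĥ(x) ≥ Φ(a), then for every t ∈ ℝ one has ĥ(x + t) ≥ Φ(a − |t|/σ), where Φ is the standard normal CDF. Equivalently, x ↦ Φ⁻¹(ĥ(x)) is σ⁻¹-Lipschitz. -/
open MeasureTheory ProbabilityTheory
open scoped NNReal ENNReal

/-- The standard normal cumulative distribution function `Φ(t) = N(0,1)((-∞, t])`. -/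
noncomputable def stdNormalCDF (t : ℝ) : ℝ :=
  (gaussianReal 0 1 (Set.Iic t)).toReal

lemma integral_gaussianReal_eq (μ : ℝ) {v : ℝ≥0} (hv : v ≠ 0) (f : ℝ → ℝ) :
    ∫ u, f u ∂(gaussianReal μ v) = ∫ u, gaussianPDFReal μ v u * f u := by
  rw [gaussianReal_of_var_ne_zero μ hv]
  have hd : gaussianPDF μ v = fun u => ((gaussianPDFReal μ v u).toNNReal : ℝ≥0∞) := rfl
  rw [hd, integral_withDensity_eq_integral_smul
    ((measurable_gaussianPDFReal μ v).real_toNNReal) f]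
  congr 1; funext u
  rw [NNReal.smul_def, Real.coe_toNNReal _ (gaussianPDFReal_nonneg μ v u), smul_eq_mul]

lemma cdf_eq (μ : ℝ) (b : ℝ) :
    ((gaussianReal μ 1 (Set.Iic b)).toReal) = ∫ u, Set.indicator (Set.Iic b) (gaussianPDFReal μ 1) u := by
  rw [gaussianReal_apply_eq_integral μ one_ne_zero,
    ENNReal.toReal_ofReal (setIntegral_nonneg measurableSet_Iic fun u _ => gaussianPDFReal_nonneg _ _ _),
    integral_indicator measurableSet_Iic]

lemma shift_meas (a s : ℝ) :
    gaussianReal 0 1 (Set.Iic (a - s)) = gaussianReal s 1 (Set.Iic a) := by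
  have hm : (gaussianReal 0 1).map (· + s) = gaussianReal s 1 := by
    simpa using gaussianReal_map_add_const (μ := 0) (v := 1) s
  rw [← hm, Measure.map_apply (measurable_add_const s) measurableSet_Iic]
  congr 1
  ext u
  simp only [Set.mem_preimage, Set.mem_Iic]
  constructor <;> intro <;> linarith

lemma pdf_ratio (s u : ℝ) :
    gaussianPDFReal s 1 u = gaussianPDFReal 0 1 u * Real.exp (s*u - s^2/2) := by
  simp only [gaussianPDFReal, NNReal.coe_one, mul_one, sub_zero]
  rw [mul_assoc, ← Real.exp_add]
  congr 1
  ring_nf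

lemma NP {g : ℝ → ℝ} (hg : Measurable g) (g0 : ∀ u, 0 ≤ g u) (g1 : ∀ u, g u ≤ 1)
    (a : ℝ) {s : ℝ} (hs : 0 ≤ s)
    (hA : stdNormalCDF a ≤ ∫ u, g u ∂(gaussianReal 0 1)) :
    stdNormalCDF (a - s) ≤ ∫ u, g u ∂(gaussianReal s 1) := by
  set p : ℝ → ℝ := gaussianPDFReal 0 1 with hp
  set q : ℝ → ℝ := gaussianPDFReal s 1 with hq
  set r : ℝ := Real.exp (s * a - s ^ 2 / 2) with hr
  -- integrabilities
  have ip : Integrable p := integrable_gaussianPDFReal 0 1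
  have iq : Integrable q := integrable_gaussianPDFReal s 1
  have hbd : ∀ (d : ℝ → ℝ), (∀ u, 0 ≤ d u) → Integrable d → Measurable d →
      Integrable (fun u => d u * g u) := by
    intro d hd hdi hdm
    refine hdi.mono ((hdm.mul hg).aestronglyMeasurable) (Filter.Eventually.of_forall fun u => ?_)
    rw [Real.norm_eq_abs, Real.norm_eq_abs, abs_mul, abs_of_nonneg (hd u),
      abs_of_nonneg (g0 u)]
    nlinarith [g1 u, hd u, g0 u]
  have ipg : Integrable (fun u => p u * g u) :=
    hbd p (fun u => gaussianPDFReal_nonneg _ _ _) ip (measurable_gaussianPDFReal _ _)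
  have iqg : Integrable (fun u => q u * g u) :=
    hbd q (fun u => gaussianPDFReal_nonneg _ _ _) iq (measurable_gaussianPDFReal _ _)
  have iip : Integrable (Set.indicator (Set.Iic a) p) := ip.indicator measurableSet_Iic
  have iiq : Integrable (Set.indicator (Set.Iic a) q) := iq.indicator measurableSet_Iic
  -- pointwise key inequality
  have key : ∀ u, 0 ≤ (g u - Set.indicator (Set.Iic a) 1 u) * (q u - r * p u) := by
    intro u
    have hqu : q u = p u * Real.exp (s * u - s ^ 2 / 2) := pdf_ratio s u
    have hpu : 0 ≤ p u := gaussianPDFReal_nonneg _ _ _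
    by_cases hu : u ∈ Set.Iic a
    · have h1 : g u - Set.indicator (Set.Iic a) 1 u ≤ 0 := by
        rw [Set.indicator_of_mem hu]; simp [g1 u]
      have h2 : q u - r * p u ≤ 0 := by
        rw [hqu, hr]
        have : Real.exp (s * u - s ^ 2 / 2) ≤ Real.exp (s * a - s ^ 2 / 2) := by
          apply Real.exp_le_exp.2
          have : s * u ≤ s * a := mul_le_mul_of_nonneg_left hu hs
          linarith
        nlinarith
      nlinarith [mul_nonneg (neg_nonneg.2 h1) (neg_nonneg.2 h2)]
    · have h1 : 0 ≤ g u - Set.indicator (Set.Iic a) 1 u := by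
        rw [Set.indicator_of_notMem hu]; simp [g0 u]
      have h2 : 0 ≤ q u - r * p u := by
        rw [hqu, hr]
        have hu' : a ≤ u := le_of_not_ge hu
        have : Real.exp (s * a - s ^ 2 / 2) ≤ Real.exp (s * u - s ^ 2 / 2) := by
          apply Real.exp_le_exp.2
          have : s * a ≤ s * u := mul_le_mul_of_nonneg_left hu' hs
          linarith
        nlinarith
      exact mul_nonneg h1 h2
  have expand : (fun u => (g u - Set.indicator (Set.Iic a) 1 u) * (q u - r * p u))
      = fun u => (q u * g u - Set.indicator (Set.Iic a) q u)
        - r * (p u * g u - Set.indicator (Set.Iic a) p u) := by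
    funext u
    by_cases hu : u ∈ Set.Iic a <;>
      simp only [Set.indicator_of_mem, Set.indicator_of_notMem, hu, Pi.one_apply,
        if_true, if_false, not_false_iff] <;> ring
  have big : 0 ≤ ((∫ u, q u * g u) - ∫ u, Set.indicator (Set.Iic a) q u)
      - r * ((∫ u, p u * g u) - ∫ u, Set.indicator (Set.Iic a) p u) := by
    have i1 : Integrable (fun u => q u * g u - Set.indicator (Set.Iic a) q u) := iqg.sub iiq
    have i2 : Integrable (fun u => p u * g u - Set.indicator (Set.Iic a) p u) := ipg.sub iip
    calc (0:ℝ) ≤ ∫ u, (g u - Set.indicator (Set.Iic a) 1 u) * (q u - r * p u) :=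
          integral_nonneg key
      _ = ∫ u, (q u * g u - Set.indicator (Set.Iic a) q u)
            - r * (p u * g u - Set.indicator (Set.Iic a) p u) := by rw [expand]
      _ = (∫ u, q u * g u - Set.indicator (Set.Iic a) q u)
            - ∫ u, r * (p u * g u - Set.indicator (Set.Iic a) p u) :=
          integral_sub i1 (i2.const_mul r)
      _ = (∫ u, q u * g u - Set.indicator (Set.Iic a) q u)
            - r * ∫ u, (p u * g u - Set.indicator (Set.Iic a) p u) := by
          rw [MeasureTheory.integral_const_mul]
      _ = ((∫ u, q u * g u) - ∫ u, Set.indicator (Set.Iic a) q u)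
            - r * ((∫ u, p u * g u) - ∫ u, Set.indicator (Set.Iic a) p u) := by
          rw [integral_sub iqg iiq, integral_sub ipg iip]
  have hr0 : (0:ℝ) ≤ r := (Real.exp_pos _).le
  have hAp : ∫ u, Set.indicator (Set.Iic a) p u ≤ ∫ u, p u * g u := by
    have e1 : ∫ u, g u ∂(gaussianReal 0 1) = ∫ u, p u * g u :=
      integral_gaussianReal_eq 0 one_ne_zero g
    have e3 : stdNormalCDF a = ∫ u, Set.indicator (Set.Iic a) p u := cdf_eq 0 a
    rw [← e1, ← e3]; exact hA
  have goalq : stdNormalCDF (a - s) = ∫ u, Set.indicator (Set.Iic a) q u := by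
    rw [stdNormalCDF, shift_meas a s, cdf_eq s a]
  have e2 : ∫ u, g u ∂(gaussianReal s 1) = ∫ u, q u * g u :=
    integral_gaussianReal_eq s one_ne_zero g
  rw [goalq, e2]
  nlinarith [mul_nonneg hr0 (sub_nonneg.2 hAp)]

lemma neg_map_gauss : (gaussianReal 0 1).map (fun u : ℝ => -u) = gaussianReal 0 1 := by
  have h1 : ((⟨(-1:ℝ)^2, sq_nonneg _⟩ : ℝ≥0) : ℝ≥0) = 1 := by ext; norm_num
  have := gaussianReal_map_const_mul (μ := 0) (v := 1) (-1)
  simp only [mul_zero, h1, one_mul] at this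
  convert this using 2
  funext u; ring
  ext; norm_num

lemma integral_neg_gauss {f : ℝ → ℝ} (hf : Measurable f) :
    ∫ u, f (-u) ∂(gaussianReal 0 1) = ∫ u, f u ∂(gaussianReal 0 1) := by
  conv_rhs => rw [← neg_map_gauss]
  rw [integral_map measurable_neg.aemeasurable hf.aestronglyMeasurable]

lemma integral_shift_gauss {f : ℝ → ℝ} (hf : Measurable f) (s : ℝ) :
    ∫ u, f u ∂(gaussianReal s 1) = ∫ u, f (u + s) ∂(gaussianReal 0 1) := by
  have hm : (gaussianReal 0 1).map (· + s) = gaussianReal s 1 := by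
    simpa using gaussianReal_map_add_const (μ := 0) (v := 1) s
  rw [← hm, integral_map (measurable_add_const s).aemeasurable hf.aestronglyMeasurable]

theorem stmt_4 {σ : ℝ} (hσ : 0 < σ)
    (h : ℝ → ℝ) (hmeas : Measurable h)
    (h0 : ∀ ψ, 0 ≤ h ψ) (h1 : ∀ ψ, h ψ ≤ 1)
    (x : ℝ) (a : ℝ)
    (ha : stdNormalCDF a ≤ ∫ ε, h (x + ε) ∂(gaussianReal 0 ⟨σ ^ 2, sq_nonneg σ⟩)) :
    ∀ t : ℝ, stdNormalCDF (a - |t| / σ) ≤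
      ∫ ε, h (x + t + ε) ∂(gaussianReal 0 ⟨σ ^ 2, sq_nonneg σ⟩) := by
  intro t
  have hσ' : σ ≠ 0 := ne_of_gt hσ
  -- the scaled measure
  have hmap : (gaussianReal 0 1).map (σ * ·) = gaussianReal 0 ⟨σ ^ 2, sq_nonneg σ⟩ := by
    have := gaussianReal_map_const_mul (μ := 0) (v := 1) σ
    rw [this]; congr 1
    · simp
    · ext; simp; rfl
  set g : ℝ → ℝ := fun u => h (x + σ * u) with hgdef
  have hg : Measurable g := hmeas.comp (measurable_const.add (measurable_id.const_mul σ))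
  have g0 : ∀ u, 0 ≤ g u := fun u => h0 _
  have g1 : ∀ u, g u ≤ 1 := fun u => h1 _
  have hA : stdNormalCDF a ≤ ∫ u, g u ∂(gaussianReal 0 1) := by
    have e : ∫ ε, h (x + ε) ∂(gaussianReal 0 ⟨σ ^ 2, sq_nonneg σ⟩)
        = ∫ u, g u ∂(gaussianReal 0 1) := by
      have hsm : Measurable fun ε : ℝ => h (x + ε) := by fun_prop
      rw [← hmap, integral_map (by fun_prop : Measurable fun u : ℝ => σ * u).aemeasurable
        hsm.aestronglyMeasurable]
    rw [← e]; exact ha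
  have etarget : ∫ ε, h (x + t + ε) ∂(gaussianReal 0 ⟨σ ^ 2, sq_nonneg σ⟩)
      = ∫ u, g u ∂(gaussianReal (t / σ) 1) := by
    have hsm : Measurable fun ε : ℝ => h (x + t + ε) := by fun_prop
    rw [← hmap, integral_map (by fun_prop : Measurable fun u : ℝ => σ * u).aemeasurable
      hsm.aestronglyMeasurable, integral_shift_gauss hg (t / σ)]
    congr 1; funext u
    have : x + t + σ * u = x + σ * (u + t / σ) := by field_simp; ring
    simp only [hgdef]; rw [this]
  rw [etarget]
  rcases le_or_gt 0 t with ht | ht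
  · have habs : |t| / σ = t / σ := by rw [abs_of_nonneg ht]
    rw [habs]
    exact NP hg g0 g1 a (div_nonneg ht hσ.le) hA
  · have habs : |t| / σ = -t / σ := by rw [abs_of_neg ht]
    rw [habs]
    set s : ℝ := -t / σ with hsdef
    have hs : 0 ≤ s := div_nonneg (by linarith) hσ.le
    set g' : ℝ → ℝ := fun u => g (-u) with hg'def
    have hg' : Measurable g' := hg.comp measurable_neg
    have hA' : stdNormalCDF a ≤ ∫ u, g' u ∂(gaussianReal 0 1) := by
      rw [show (∫ u, g' u ∂(gaussianReal 0 1)) = ∫ u, g u ∂(gaussianReal 0 1) from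
        integral_neg_gauss hg]
      exact hA
    have hnp := NP hg' (fun u => g0 _) (fun u => g1 _) a hs hA'
    have efin : ∫ u, g' u ∂(gaussianReal s 1) = ∫ u, g u ∂(gaussianReal (t / σ) 1) := by
      rw [integral_shift_gauss hg' s, integral_shift_gauss hg (t / σ)]
      have eneg : ∀ u : ℝ, g' (u + s) = (fun v => g (v - s)) (-u) := by
        intro u; simp only [hg'def]; congr 1; ring
      have hgm : Measurable fun v : ℝ => g (v - s) := by fun_prop
      rw [show (fun u => g' (u + s)) = fun u => (fun v => g (v - s)) (-u) from funext eneg,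
        integral_neg_gauss hgm]
      congr 1; funext u
      congr 1
      rw [hsdef]; field_simp
      ring
    rw [← efin]
    exact hnp
end
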